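/- Let {B_N} be a sequence of natural numbers such that for every d ∈ ℕ there exists N_0 ∈ ℕ with d | B_N for all N > N_0. Let A_1, A_2, A_3, ... be pairwise disjoint Buck measurable subsets of ℕ, and suppose there exists a convergent series Σ_{n=1}^∞ c_n with positive terms such that R(A_n : B_N)/B_N ≤ c_n for all n, N ∈ ℕ. Then A = ⋃_{n=1}^∞ A_n is Buck measurable and μ(A) = Σ_{n=1}^∞ μ(A_n). -/

import Mathlib

open scoped BigOperators

/-- Buck's measure density: the infimum of `∑ 1/mᵢ` over finite covers of `S`
by arithmetic progressions `{n | n ≡ rᵢ [MOD mᵢ]}`. -/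
noncomputable def buckDensity (S : Set ℕ) : ℝ :=
  sInf {x : ℝ | ∃ (k : ℕ) (r m : Fin k → ℕ), (∀ i, 0 < m i) ∧
    (S ⊆ ⋃ i, {n : ℕ | n ≡ r i [MOD m i]}) ∧ x = ∑ i, (1 : ℝ) / (m i)}

/-- A set is Buck measurable if `μ*(S) + μ*(ℕ \ S) = 1`. -/
def BuckMeasurable (S : Set ℕ) : Prop :=
  buckDensity S + buckDensity Sᶜ = 1

/-- `R(S : m)`: the number of residue classes modulo `m` occupied by `S`. -/
noncomputable def residueCount (S : Set ℕ) (m : ℕ) : ℕ :=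
  ((fun s => s % m) '' S).ncard

/-! ### Auxiliary lemmas about `buckDensity` -/

def BW (S : Set ℕ) : Set ℝ :=
  {x : ℝ | ∃ (k : ℕ) (r m : Fin k → ℕ), (∀ i, 0 < m i) ∧
    (S ⊆ ⋃ i, {n : ℕ | n ≡ r i [MOD m i]}) ∧ x = ∑ i, (1 : ℝ) / (m i)}

lemma buckDensity_eq (S : Set ℕ) : buckDensity S = sInf (BW S) := rfl

lemma BW_nonempty (S : Set ℕ) : (BW S).Nonempty := by
  refine ⟨1, 1, fun _ => 0, fun _ => 1, fun _ => one_pos, ?_, by simp⟩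
  intro n _
  simp [Nat.modEq_one]

lemma BW_bdd (S : Set ℕ) : BddBelow (BW S) := by
  refine ⟨0, ?_⟩
  rintro x ⟨k, r, m, hm, hcov, rfl⟩
  positivity

lemma buckDensity_nonneg (S : Set ℕ) : 0 ≤ buckDensity S :=
  le_csInf (BW_nonempty S) (fun x hx => by
    obtain ⟨k, r, m, hm, hcov, rfl⟩ := hx; positivity)

lemma buckDensity_mono {S T : Set ℕ} (h : S ⊆ T) : buckDensity S ≤ buckDensity T := by
  apply csInf_le_csInf (BW_bdd S) (BW_nonempty T)
  rintro x ⟨k, r, m, hm, hcov, rfl⟩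
  exact ⟨k, r, m, hm, h.trans hcov, rfl⟩

lemma buckDensity_le_of_cover {S : Set ℕ} {k : ℕ} {r m : Fin k → ℕ} (hm : ∀ i, 0 < m i)
    (hcov : S ⊆ ⋃ i, {n : ℕ | n ≡ r i [MOD m i]}) :
    buckDensity S ≤ ∑ i, (1 : ℝ) / (m i) :=
  csInf_le (BW_bdd S) ⟨k, r, m, hm, hcov, rfl⟩

lemma buckDensity_le_one (S : Set ℕ) : buckDensity S ≤ 1 := by
  have := buckDensity_le_of_cover (S := S) (k := 1) (r := fun _ => 0) (m := fun _ => 1)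
    (fun _ => one_pos) (by intro n _; simp [Nat.modEq_one])
  simpa using this

lemma exists_cover_lt (S : Set ℕ) {ε : ℝ} (hε : 0 < ε) :
    ∃ (k : ℕ) (r m : Fin k → ℕ), (∀ i, 0 < m i) ∧
      (S ⊆ ⋃ i, {n : ℕ | n ≡ r i [MOD m i]}) ∧
      ∑ i, (1 : ℝ) / (m i) < buckDensity S + ε := by
  obtain ⟨x, hx, hxlt⟩ := exists_lt_of_csInf_lt (BW_nonempty S)
    (show sInf (BW S) < buckDensity S + ε by rw [buckDensity_eq]; linarith [buckDensity_eq S])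
  obtain ⟨k, r, m, hm, hcov, rfl⟩ := hx
  exact ⟨k, r, m, hm, hcov, hxlt⟩

lemma card_filter_mod_le (L m r : ℕ) (hm : 0 < m) :
    ((Finset.range L).filter (fun n => n % m = r % m)).card ≤ L / m + 1 := by
  have : ((Finset.range L).filter (fun n => n % m = r % m)).card ≤ (Finset.range (L / m + 1)).card := by
    apply Finset.card_le_card_of_injOn (fun n => n / m)
    · intro a ha
      simp only [Finset.mem_coe, Finset.mem_filter, Finset.mem_range] at ha ⊢
      exact lt_of_le_of_lt (Nat.div_le_div_right ha.1.le) (Nat.lt_succ_self _)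
    · intro a ha b hb hab
      simp only [Finset.coe_filter, Set.mem_setOf_eq, Finset.mem_range] at ha hb
      have hab2 : a / m = b / m := by simpa using hab
      have h3 : a % m = r % m := ha.2
      have h4 : b % m = r % m := hb.2
      calc a = m * (a / m) + a % m := (Nat.div_add_mod a m).symm
        _ = m * (b / m) + b % m := by rw [hab2, h3, h4]
        _ = b := Nat.div_add_mod b m
  simpa using this

lemma one_le_weight_of_cover_univ {k : ℕ} {r m : Fin k → ℕ} (hm : ∀ i, 0 < m i)
    (hcov : (Set.univ : Set ℕ) ⊆ ⋃ i, {n : ℕ | n ≡ r i [MOD m i]}) :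
    1 ≤ ∑ i, (1 : ℝ) / (m i) := by
  by_contra hlt
  push_neg at hlt
  set w := ∑ i, (1 : ℝ) / (m i) with hw
  have hw0 : 0 ≤ w := by positivity
  obtain ⟨L, hL⟩ := exists_nat_gt ((k : ℝ) / (1 - w))
  have hLpos : 0 < (L : ℝ) :=
    lt_of_le_of_lt (div_nonneg (by positivity) (by linarith)) hL
  have hcount : (L : ℝ) ≤ L * w + k := by
    have hsub : Finset.range L ⊆ (Finset.univ : Finset (Fin k)).biUnion
        (fun i => (Finset.range L).filter (fun n => n % m i = r i % m i)) := by
      intro n hn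
      have := hcov (Set.mem_univ n)
      simp only [Set.mem_iUnion, Set.mem_setOf_eq] at this
      obtain ⟨i, hi⟩ := this
      exact Finset.mem_biUnion.2 ⟨i, Finset.mem_univ i, Finset.mem_filter.2 ⟨hn, hi⟩⟩
    have h1 : L ≤ ∑ i : Fin k, ((Finset.range L).filter (fun n => n % m i = r i % m i)).card := by
      calc L = (Finset.range L).card := (Finset.card_range L).symm
        _ ≤ _ := le_trans (Finset.card_le_card hsub) (Finset.card_biUnion_le)
    have h2 : (L : ℝ) ≤ ∑ i : Fin k, ((L / m i : ℕ) + 1 : ℝ) := by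
      calc (L : ℝ) ≤ (∑ i : Fin k, ((Finset.range L).filter (fun n => n % m i = r i % m i)).card : ℕ) := by
            exact_mod_cast h1
        _ ≤ _ := by
            push_cast
            apply Finset.sum_le_sum
            intro i _
            exact_mod_cast card_filter_mod_le L (m i) (r i) (hm i)
    calc (L : ℝ) ≤ ∑ i : Fin k, ((L / m i : ℕ) + 1 : ℝ) := h2
      _ ≤ ∑ i : Fin k, ((L : ℝ) / m i + 1) := by
          apply Finset.sum_le_sum
          intro i _
          have := Nat.cast_div_le (α := ℝ) (m := L) (n := m i)
          linarith
      _ = L * w + k := by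
          rw [Finset.sum_add_distrib]
          simp [hw, Finset.mul_sum, mul_one_div, div_eq_mul_inv]
  have h3 : (k : ℝ) / (1 - w) < L := hL
  have h4 : (k : ℝ) < L * (1 - w) := (div_lt_iff₀ (by linarith)).mp h3
  nlinarith

lemma buckDensity_union_le (S T : Set ℕ) :
    buckDensity (S ∪ T) ≤ buckDensity S + buckDensity T := by
  have key : ∀ ε > (0:ℝ), buckDensity (S ∪ T) ≤ buckDensity S + buckDensity T + ε := by
    intro ε hε
    obtain ⟨k₁, r₁, m₁, hm₁, hcov₁, hw₁⟩ := exists_cover_lt S (half_pos hε)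
    obtain ⟨k₂, r₂, m₂, hm₂, hcov₂, hw₂⟩ := exists_cover_lt T (half_pos hε)
    have hm : ∀ i : Fin (k₁ + k₂), 0 < Fin.append m₁ m₂ i := by
      intro i
      induction i using Fin.addCases with
      | left i => rw [Fin.append_left]; exact hm₁ i
      | right i => rw [Fin.append_right]; exact hm₂ i
    have hcov : S ∪ T ⊆ ⋃ i : Fin (k₁ + k₂),
        {n : ℕ | n ≡ Fin.append r₁ r₂ i [MOD Fin.append m₁ m₂ i]} := by
      rintro s (hs | hs)
      · obtain ⟨i, hi⟩ := Set.mem_iUnion.1 (hcov₁ hs)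
        exact Set.mem_iUnion.2 ⟨Fin.castAdd k₂ i, by
          simpa [Fin.append_left] using hi⟩
      · obtain ⟨i, hi⟩ := Set.mem_iUnion.1 (hcov₂ hs)
        exact Set.mem_iUnion.2 ⟨Fin.natAdd k₁ i, by
          simpa [Fin.append_right] using hi⟩
    have hsum : ∑ i : Fin (k₁ + k₂), (1 : ℝ) / (Fin.append m₁ m₂ i)
        = ∑ i : Fin k₁, (1:ℝ) / m₁ i + ∑ i : Fin k₂, (1:ℝ) / m₂ i := by
      rw [Fin.sum_univ_add]
      simp [Fin.append_left, Fin.append_right]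
    have := buckDensity_le_of_cover hm hcov
    rw [hsum] at this
    linarith
  by_contra h
  push_neg at h
  linarith [key ((buckDensity (S ∪ T) - (buckDensity S + buckDensity T))/2) (by linarith)]

lemma buck_le_card_div (S : Set ℕ) (M : ℕ) (hM : 0 < M) (T : Finset ℕ)
    (h : ∀ s ∈ S, s % M ∈ T) : buckDensity S ≤ (T.card : ℝ) / M := by
  have hcov : S ⊆ ⋃ i : Fin T.card, {n : ℕ | n ≡ (T.equivFin.symm i : ℕ) [MOD M]} := by
    intro s hs
    refine Set.mem_iUnion.2 ⟨T.equivFin ⟨s % M, h s hs⟩, ?_⟩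
    show s ≡ _ [MOD M]
    rw [Equiv.symm_apply_apply]
    exact (Nat.mod_modEq s M).symm
  have := buckDensity_le_of_cover (m := fun _ : Fin T.card => M) (fun _ => hM) hcov
  simpa [div_eq_mul_inv, Finset.sum_const, Finset.card_univ] using this

lemma buckDensity_empty_le : buckDensity (∅ : Set ℕ) ≤ 0 := by
  have := buckDensity_le_of_cover (S := (∅ : Set ℕ)) (k := 0)
    (r := Fin.elim0) (m := Fin.elim0) (fun i => i.elim0) (Set.empty_subset _)
  simpa using this

lemma buckDensity_biUnion_le (f : ℕ → Set ℕ) (k : ℕ) :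
    buckDensity (⋃ n ∈ Finset.range k, f n) ≤ ∑ n ∈ Finset.range k, buckDensity (f n) := by
  induction k with
  | zero => simpa using buckDensity_empty_le
  | succ k ih =>
      have hset : (⋃ n ∈ Finset.range (k+1), f n) =
          (⋃ n ∈ Finset.range k, f n) ∪ f k := by
        rw [Finset.range_add_one, Finset.set_biUnion_insert]
        exact Set.union_comm _ _
      rw [hset, Finset.sum_range_succ]
      exact le_trans (buckDensity_union_le _ _) (by linarith [ih])

lemma one_le_buck_add_compl (S : Set ℕ) : 1 ≤ buckDensity S + buckDensity Sᶜ := by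
  have h1 : (1 : ℝ) ≤ buckDensity (Set.univ : Set ℕ) := by
    apply le_csInf
    · exact ⟨1, 1, fun _ => 0, fun _ => 1, fun _ => one_pos, by intro n _; simp [Nat.modEq_one], by simp⟩
    · rintro x ⟨k, r, m, hm, hcov, rfl⟩
      exact one_le_weight_of_cover_univ hm hcov
  have h2 : (Set.univ : Set ℕ) = S ∪ Sᶜ := (Set.union_compl_self S).symm
  calc (1:ℝ) ≤ buckDensity (Set.univ) := h1
    _ = buckDensity (S ∪ Sᶜ) := by rw [h2]
    _ ≤ _ := buckDensity_union_le _ _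

lemma image_mod_finite (S : Set ℕ) (M : ℕ) (hM : 0 < M) :
    ((fun s => s % M) '' S).Finite := by
  apply Set.Finite.subset (Set.finite_Iio M)
  rintro _ ⟨s, _, rfl⟩
  exact Nat.mod_lt _ hM

lemma tail_bound (A : ℕ → Set ℕ) (c : ℕ → ℝ) (hcpos : ∀ n, 0 < c n) (hcsum : Summable c)
    (Mo : ℕ) (hMo : 0 < Mo)
    (hbound : ∀ n, (residueCount (A n) Mo : ℝ) / (Mo : ℝ) ≤ c n) (k : ℕ) :
    buckDensity (⋃ n, A (n + k)) ≤ ∑' m, c (m + k) := by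
  set S := ⋃ n, A (n + k) with hS
  have hfin : ((fun s => s % Mo) '' S).Finite := image_mod_finite S Mo hMo
  set T := hfin.toFinset with hT
  have hmem : ∀ s ∈ S, s % Mo ∈ T := by
    intro s hs
    rw [hT, Set.Finite.mem_toFinset]
    exact ⟨s, hs, rfl⟩
  have h1 : buckDensity S ≤ (T.card : ℝ) / Mo := buck_le_card_div S Mo hMo T hmem
  have hsel : ∀ t : ℕ, t ∈ T → ∃ n : ℕ, t ∈ (fun s => s % Mo) '' (A (n + k)) := by
    intro t ht
    rw [hT, Set.Finite.mem_toFinset] at ht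
    obtain ⟨s, hs, rfl⟩ := ht
    obtain ⟨n, hn⟩ := Set.mem_iUnion.1 hs
    exact ⟨n, ⟨s, hn, rfl⟩⟩
  choose! g hg using hsel
  set J := T.image g with hJ
  have hfin' : ∀ n : ℕ, ((fun s => s % Mo) '' (A (n + k))).Finite :=
    fun n => image_mod_finite _ Mo hMo
  have hTsub : T ⊆ J.biUnion (fun n => (hfin' n).toFinset) := by
    intro t ht
    refine Finset.mem_biUnion.2 ⟨g t, Finset.mem_image_of_mem g ht, ?_⟩
    rw [Set.Finite.mem_toFinset]
    exact hg t ht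
  have hsummk : Summable (fun m => c (m + k)) := (summable_nat_add_iff k).2 hcsum
  have hcard : (T.card : ℝ) ≤ Mo * ∑' m, c (m + k) := by
    have h2 : T.card ≤ ∑ n ∈ J, ((hfin' n).toFinset).card :=
      le_trans (Finset.card_le_card hTsub) Finset.card_biUnion_le
    have h3 : ∀ n, (((hfin' n).toFinset).card : ℝ) ≤ Mo * c (n + k) := by
      intro n
      have : ((hfin' n).toFinset).card = residueCount (A (n + k)) Mo := by
        rw [residueCount, Set.ncard_eq_toFinset_card _ (hfin' n)]
      rw [this]
      have := hbound (n + k)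
      rw [div_le_iff₀ (by exact_mod_cast hMo)] at this
      linarith
    calc (T.card : ℝ) ≤ ∑ n ∈ J, (((hfin' n).toFinset).card : ℝ) := by exact_mod_cast h2
      _ ≤ ∑ n ∈ J, Mo * c (n + k) := Finset.sum_le_sum (fun n _ => h3 n)
      _ = Mo * ∑ n ∈ J, c (n + k) := by rw [Finset.mul_sum]
      _ ≤ Mo * ∑' m, c (m + k) := by
          apply mul_le_mul_of_nonneg_left _ (by positivity)
          exact hsummk.sum_le_tsum J (fun n _ => (hcpos _).le)
  calc buckDensity S ≤ (T.card : ℝ) / Mo := h1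
    _ ≤ ∑' m, c (m + k) := by
        rw [div_le_iff₀ (by exact_mod_cast hMo)]
        linarith

open Finset in
lemma compl_bound (A : ℕ → Set ℕ) (hdisj : Pairwise (Function.onFun Disjoint A))
    (hmeas : ∀ n, BuckMeasurable (A n)) (k : ℕ) :
    buckDensity ((⋃ n, A n)ᶜ) ≤ 1 - ∑ n ∈ Finset.range k, buckDensity (A n) := by
  classical
  rcases Nat.eq_zero_or_pos k with hk | hk
  · subst hk; simpa using buckDensity_le_one _
  apply le_of_forall_pos_le_add
  intro ε hε
  have hkR : (0:ℝ) < k := by exact_mod_cast hk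
  set ε' : ℝ := ε / (2 * k) with hε'def
  have hε' : 0 < ε' := by positivity
  choose kk rr mm hpos hcov hw using fun n : Fin k => exists_cover_lt ((A n)ᶜ) hε'
  set w : Fin k → ℝ := fun n => ∑ i, (1:ℝ) / (mm n i) with hwdef
  set P : ℕ := ∏ n : Fin k, ∏ i, mm n i with hPdef
  have hP : 0 < P := Finset.prod_pos (fun n _ => Finset.prod_pos (fun i _ => hpos n i))
  set K : ℕ := ∑ n : Fin k, kk n with hKdef
  obtain ⟨Z, hZ⟩ := exists_nat_gt ((K : ℝ) / (ε / 2))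
  have hZpos : 0 < Z := by
    have h0 : (0:ℝ) ≤ (K : ℝ) / (ε / 2) := by positivity
    exact_mod_cast lt_of_le_of_lt h0 hZ
  have hKZ : (K : ℝ) < (ε / 2) * Z := by
    rw [div_lt_iff₀ (by positivity)] at hZ
    linarith
  set M : ℕ := P * Z with hMdef
  have hM : 0 < M := Nat.mul_pos hP hZpos
  have hMR : (0:ℝ) < M := by exact_mod_cast hM
  have hZM : Z ≤ M := Nat.le_mul_of_pos_left Z hP
  have hdvd : ∀ (n : Fin k) (i : Fin (kk n)), mm n i ∣ M := by
    intro n i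
    apply dvd_mul_of_dvd_left
    exact (Finset.dvd_prod_of_mem _ (Finset.mem_univ i)).trans
      (Finset.dvd_prod_of_mem (fun n => ∏ i, mm n i) (Finset.mem_univ n))
  set G : Fin k → Finset ℕ := fun n =>
    (Finset.range M).filter (fun t => ∀ i, ¬ (t % mm n i = rr n i % mm n i)) with hGdef
  have hGmem : ∀ n : Fin k, ∀ t ∈ G n, ∀ s : ℕ, s % M = t % M → s ∈ A n := by
    intro n t ht s hst
    by_contra hsA
    obtain ⟨i, hi⟩ := Set.mem_iUnion.1 (hcov n hsA)
    have h1 : t ≡ s [MOD M] := hst.symm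
    have h2 : t ≡ s [MOD mm n i] := Nat.ModEq.of_dvd (hdvd n i) h1
    have h3 : t ≡ rr n i [MOD mm n i] := h2.trans hi
    exact (Finset.mem_filter.1 ht).2 i h3
  have hGcard : ∀ n : Fin k, (M:ℝ) - M * w n - kk n ≤ ((G n).card : ℝ) := by
    intro n
    have hsplit := Finset.card_filter_add_card_filter_not
      (s := Finset.range M) (p := fun t => ∀ i, ¬ (t % mm n i = rr n i % mm n i))
    have hsub : (Finset.range M).filter
        (fun t => ¬ ∀ i, ¬ (t % mm n i = rr n i % mm n i)) ⊆
        Finset.univ.biUnion (fun i : Fin (kk n) =>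
          (Finset.range M).filter (fun t => t % mm n i = rr n i % mm n i)) := by
      intro t ht
      obtain ⟨htM, hex⟩ := Finset.mem_filter.1 ht
      push_neg at hex
      obtain ⟨i, hi⟩ := hex
      exact Finset.mem_biUnion.2 ⟨i, Finset.mem_univ i, Finset.mem_filter.2 ⟨htM, hi⟩⟩
    have hbadcard : ((Finset.range M).filter
        (fun t => ¬ ∀ i, ¬ (t % mm n i = rr n i % mm n i))).card
        ≤ ∑ i : Fin (kk n), (M / mm n i + 1) :=
      le_trans (Finset.card_le_card hsub)
        (le_trans Finset.card_biUnion_le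
          (Finset.sum_le_sum (fun i _ => card_filter_mod_le M (mm n i) (rr n i) (hpos n i))))
    have hbadR : ((( Finset.range M).filter
        (fun t => ¬ ∀ i, ¬ (t % mm n i = rr n i % mm n i))).card : ℝ)
        ≤ M * w n + kk n := by
      calc _ ≤ ((∑ i : Fin (kk n), (M / mm n i + 1) : ℕ) : ℝ) := by exact_mod_cast hbadcard
        _ ≤ ∑ i : Fin (kk n), ((M:ℝ) / mm n i + 1) := by
            push_cast
            apply Finset.sum_le_sum
            intro i _
            have := Nat.cast_div_le (α := ℝ) (m := M) (n := mm n i)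
            simp only [add_le_add_iff_right]
            exact this
        _ = M * w n + kk n := by
            rw [Finset.sum_add_distrib, hwdef]
            simp [Finset.mul_sum, mul_one_div, div_eq_mul_inv]
    have hGc : (G n).card + ((Finset.range M).filter
        (fun t => ¬ ∀ i, ¬ (t % mm n i = rr n i % mm n i))).card = M := by
      rw [hGdef]
      simpa using hsplit
    have : ((G n).card : ℝ) = M - ((( Finset.range M).filter
        (fun t => ¬ ∀ i, ¬ (t % mm n i = rr n i % mm n i))).card : ℝ) := by
      have := congrArg (fun x : ℕ => (x : ℝ)) hGc
      push_cast at this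
      linarith
    linarith
  have hGdisj : ∀ n ∈ Finset.univ, ∀ n' ∈ Finset.univ, n ≠ n' →
      Disjoint (G n) (G n') := by
    intro n _ n' _ hne
    rw [Finset.disjoint_left]
    intro t ht ht'
    have h1 : t ∈ A n := hGmem n t ht t rfl
    have h2 : t ∈ A n' := hGmem n' t ht' t rfl
    have hval : (n : ℕ) ≠ (n' : ℕ) := fun h => hne (Fin.val_injective h)
    exact Set.disjoint_left.1 (hdisj hval) h1 h2
  set H : Finset ℕ := (Finset.range M).filter (fun t => ∀ n : Fin k, t ∉ G n) with hHdef
  have hAH : ∀ s ∈ (⋃ n, A n)ᶜ, s % M ∈ H := by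
    intro s hs
    rw [hHdef, Finset.mem_filter]
    refine ⟨Finset.mem_range.2 (Nat.mod_lt _ hM), ?_⟩
    intro n hmem
    have : s ∈ A n := hGmem n _ hmem s (Nat.mod_mod_of_dvd s dvd_rfl).symm
    exact hs (Set.mem_iUnion.2 ⟨n, this⟩)
  have hHcard : (H.card : ℝ) ≤ (M : ℝ) - ∑ n : Fin k, ((G n).card : ℝ) := by
    have hdisjHG : Disjoint H (Finset.univ.biUnion G) := by
      rw [Finset.disjoint_left]
      intro t ht htG
      obtain ⟨n, _, hn⟩ := Finset.mem_biUnion.1 htG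
      exact (Finset.mem_filter.1 ht).2 n hn
    have hsubM : H ∪ Finset.univ.biUnion G ⊆ Finset.range M := by
      apply Finset.union_subset
      · exact Finset.filter_subset _ _
      · intro t ht
        obtain ⟨n, _, hn⟩ := Finset.mem_biUnion.1 ht
        exact (Finset.mem_filter.1 hn).1
    have h1 : H.card + ∑ n : Fin k, (G n).card ≤ M := by
      calc H.card + ∑ n : Fin k, (G n).card
          = H.card + (Finset.univ.biUnion G).card := by
            rw [Finset.card_biUnion hGdisj]
        _ = (H ∪ Finset.univ.biUnion G).card := (Finset.card_union_of_disjoint hdisjHG).symm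
        _ ≤ (Finset.range M).card := Finset.card_le_card hsubM
        _ = M := Finset.card_range M
    have h2 : ((H.card + ∑ n : Fin k, (G n).card : ℕ) : ℝ) ≤ M := by exact_mod_cast h1
    push_cast at h2
    linarith
  have hwle : ∀ n : Fin k, w n ≤ 1 - buckDensity (A n) + ε' := by
    intro n
    have h1 := hw n
    have h2 := hmeas (n : ℕ)
    rw [BuckMeasurable] at h2
    rw [hwdef]
    simp only
    linarith [h1]
  have hsumG : (M:ℝ) * k - M * (∑ n : Fin k, w n) - K ≤ ∑ n : Fin k, ((G n).card : ℝ) := by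
    have := Finset.sum_le_sum (fun n (_ : n ∈ Finset.univ) => hGcard n)
    calc (M:ℝ) * k - M * (∑ n : Fin k, w n) - K
        = ∑ n : Fin k, ((M:ℝ) - M * w n - kk n) := by
          rw [Finset.sum_sub_distrib, Finset.sum_sub_distrib, Finset.mul_sum, hKdef]
          push_cast
          simp [mul_comm]
      _ ≤ _ := this
  have hsumw : ∑ n : Fin k, w n ≤ (k : ℝ) - ∑ n : Fin k, buckDensity (A n) + ε / 2 := by
    have h1 := Finset.sum_le_sum (fun n (_ : n ∈ Finset.univ) => hwle n)
    have h2 : ∑ n : Fin k, ((1:ℝ) - buckDensity (A n) + ε') =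
        (k : ℝ) - ∑ n : Fin k, buckDensity (A n) + k * ε' := by
      rw [Finset.sum_add_distrib, Finset.sum_sub_distrib]
      simp [Finset.card_univ, mul_comm]
    have h3 : (k : ℝ) * ε' = ε / 2 := by
      rw [hε'def]
      field_simp
    linarith
  have hKM : (K : ℝ) ≤ (ε / 2) * M := by
    have hZMR : (Z : ℝ) ≤ M := by exact_mod_cast hZM
    nlinarith
  have hfinal : (H.card : ℝ) ≤ M * (1 - ∑ n : Fin k, buckDensity (A n) + ε) := by
    have := hHcard
    nlinarith [hsumG, hsumw, hKM, hMR]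
  have hmain : buckDensity ((⋃ n, A n)ᶜ) ≤ (H.card : ℝ) / M :=
    buck_le_card_div _ M hM H hAH
  have hfin2 : (H.card : ℝ) / M ≤ 1 - ∑ n : Fin k, buckDensity (A n) + ε := by
    rw [div_le_iff₀ hMR]
    nlinarith
  have hrange : ∑ n : Fin k, buckDensity (A n) = ∑ n ∈ Finset.range k, buckDensity (A n) :=
    Fin.sum_univ_eq_sum_range (fun n => buckDensity (A n)) k
  linarith [hmain, hfin2, hrange.symm.le, hrange.le]

theorem stmt_7 (B : ℕ → ℕ) (hBpos : ∀ N, 0 < B N)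
    (hB : ∀ d : ℕ, ∃ N₀ : ℕ, ∀ N > N₀, d ∣ B N)
    (A : ℕ → Set ℕ) (hdisj : Pairwise (Function.onFun Disjoint A))
    (hmeas : ∀ n, BuckMeasurable (A n))
    (c : ℕ → ℝ) (hcpos : ∀ n, 0 < c n) (hcsum : Summable c)
    (hbound : ∀ n N, (residueCount (A n) (B N) : ℝ) / (B N : ℝ) ≤ c n) :
    BuckMeasurable (⋃ n, A n) ∧
      HasSum (fun n => buckDensity (A n)) (buckDensity (⋃ n, A n)) := by
  classical
  set d : ℕ → ℝ := fun n => buckDensity (A n) with hd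
  have hd0 : ∀ n, 0 ≤ d n := fun n => buckDensity_nonneg _
  have hdc : ∀ n, d n ≤ c n := by
    intro n
    have hMo : 0 < B 0 := hBpos 0
    have hfin := image_mod_finite (A n) (B 0) hMo
    have h1 : buckDensity (A n) ≤ (hfin.toFinset.card : ℝ) / (B 0) :=
      buck_le_card_div _ _ hMo _ (fun s hs => hfin.mem_toFinset.2 ⟨s, hs, rfl⟩)
    have h2 : hfin.toFinset.card = residueCount (A n) (B 0) :=
      (Set.ncard_eq_toFinset_card _ hfin).symm
    calc d n ≤ (hfin.toFinset.card : ℝ) / (B 0) := h1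
      _ = (residueCount (A n) (B 0) : ℝ) / (B 0) := by rw [h2]
      _ ≤ c n := hbound n 0
  have hdsum : Summable d := Summable.of_nonneg_of_le hd0 hdc hcsum
  set D : ℝ := ∑' n, d n with hD
  have hupper : buckDensity (⋃ n, A n) ≤ D := by
    have hbd : ∀ k, buckDensity (⋃ n, A n) ≤
        (∑ n ∈ Finset.range k, d n) + ∑' m, c (m + k) := by
      intro k
      have hsplit : (⋃ n, A n) ⊆ (⋃ n ∈ Finset.range k, A n) ∪ ⋃ n, A (n + k) := by
        rintro s hs
        obtain ⟨n, hn⟩ := Set.mem_iUnion.1 hs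
        rcases lt_or_ge n k with h | h
        · exact Or.inl (Set.mem_biUnion (Finset.mem_range.2 h) hn)
        · refine Or.inr (Set.mem_iUnion.2 ⟨n - k, ?_⟩)
          rwa [Nat.sub_add_cancel h]
      calc buckDensity (⋃ n, A n)
          ≤ buckDensity ((⋃ n ∈ Finset.range k, A n) ∪ ⋃ n, A (n + k)) :=
            buckDensity_mono hsplit
        _ ≤ buckDensity (⋃ n ∈ Finset.range k, A n) + buckDensity (⋃ n, A (n + k)) :=
            buckDensity_union_le _ _
        _ ≤ (∑ n ∈ Finset.range k, d n) + ∑' m, c (m + k) :=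
            add_le_add (buckDensity_biUnion_le A k)
              (tail_bound A c hcpos hcsum (B 0) (hBpos 0) (fun n => hbound n 0) k)
    have htail : ∀ k, ∑' m, c (m + k) = (∑' n, c n) - ∑ n ∈ Finset.range k, c n := by
      intro k
      have := Summable.sum_add_tsum_nat_add (f := c) k hcsum
      linarith
    have h1 : Filter.Tendsto
        (fun k => (∑ n ∈ Finset.range k, d n) + ((∑' n, c n) - ∑ n ∈ Finset.range k, c n))
        Filter.atTop (nhds (D + ((∑' n, c n) - ∑' n, c n))) :=
      (hdsum.hasSum.tendsto_sum_nat).add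
        (Filter.Tendsto.sub tendsto_const_nhds hcsum.hasSum.tendsto_sum_nat)
    rw [sub_self, add_zero] at h1
    refine ge_of_tendsto' h1 (fun k => ?_)
    rw [← htail k]
    exact hbd k
  have hcompl : buckDensity ((⋃ n, A n)ᶜ) ≤ 1 - D := by
    have h1 : Filter.Tendsto (fun k => 1 - ∑ n ∈ Finset.range k, d n)
        Filter.atTop (nhds (1 - D)) :=
      Filter.Tendsto.sub tendsto_const_nhds (hdsum.hasSum.tendsto_sum_nat)
    exact ge_of_tendsto' h1 (fun k => compl_bound A hdisj hmeas k)
  have h1le : 1 ≤ buckDensity (⋃ n, A n) + buckDensity ((⋃ n, A n)ᶜ) :=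
    one_le_buck_add_compl _
  have hUeq : buckDensity (⋃ n, A n) = D := le_antisymm hupper (by linarith)
  constructor
  · rw [BuckMeasurable, hUeq]
    have : buckDensity ((⋃ n, A n)ᶜ) = 1 - D := le_antisymm hcompl (by linarith)
    rw [this]; ring
  · rw [hUeq, hD]
    exact hdsum.hasSum
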